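/- (Double robustness of the g-estimating equation for δ^D.) (i) For every function w : {0,1} × 𝒳 → ℝ and every x ∈ 𝒳, E[ ( D − δ^D(X)·Z − p_0^D(X) ) · w(Z, X) | X = x ] = 0, where δ^D and p_0^D are the true nuisance functions. (ii) For every function p* : 𝒳 → ℝ and every x ∈ 𝒳, E[ ( D − δ^D(X)·Z − p*(X) ) · (2Z − 1)/f(Z | X) | X = x ] = 0, where f is the true conditional instrument density. -/

import Mathlib

open MeasureTheory

/-- Conditional mean of `W` given event `A`: `E[W | A] = (∫_A W dμ) / μ(A)`. -/
noncomputable def condMean {Ω : Type*} [MeasurableSpace Ω] (μ : Measure Ω)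
    (W : Ω → ℝ) (A : Set Ω) : ℝ :=
  (∫ ω in A, W ω ∂μ) / (μ A).toReal

lemma setIntegral_affine_piece {Ω : Type*} [MeasurableSpace Ω] (μ : Measure Ω)
    [IsProbabilityMeasure μ]
    (D : Ω → ℝ) (hDmeas : Measurable D) (hD01 : ∀ ω, D ω = 0 ∨ D ω = 1)
    (A : Set Ω) (hA : MeasurableSet A) (hApos : 0 < μ A)
    (c k : ℝ) (g : Ω → ℝ) (hg : ∀ ω ∈ A, g ω = (D ω - c) * k) :
    IntegrableOn g A μ ∧
    ∫ ω in A, g ω ∂μ = (condMean μ D A - c) * k * (μ A).toReal := by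
  have hDint : Integrable D μ := by
    refine Integrable.mono' (integrable_const (1:ℝ)) hDmeas.aestronglyMeasurable ?_
    filter_upwards with ω
    rcases hD01 ω with h | h <;> simp [h]
  have hDA : IntegrableOn D A μ := hDint.integrableOn
  have hAfin : μ A < ⊤ := measure_lt_top μ A
  have hint : IntegrableOn (fun ω => (D ω - c) * k) A μ :=
    (hDA.sub (integrableOn_const hAfin.ne)).mul_const k
  have htne : (μ A).toReal ≠ 0 :=
    ENNReal.toReal_ne_zero.2 ⟨hApos.ne', hAfin.ne⟩
  have hval : ∫ ω in A, g ω ∂μ = (condMean μ D A - c) * k * (μ A).toReal := by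
    rw [setIntegral_congr_fun hA (fun ω hω => hg ω hω)]
    rw [integral_mul_const, integral_sub hDA (integrableOn_const hAfin.ne),
      setIntegral_const]
    have : ∫ ω in A, D ω ∂μ = condMean μ D A * (μ A).toReal := by
      rw [condMean, div_mul_cancel₀ _ htne]
    rw [this]
    simp [smul_eq_mul, Measure.real_def]
    ring
  exact ⟨hint.congr_fun (fun ω hω => (hg ω hω).symm) hA, hval⟩

lemma condMean_split {Ω : Type*} [MeasurableSpace Ω] (μ : Measure Ω)
    [IsProbabilityMeasure μ]
    {𝒳 : Type*} [MeasurableSpace 𝒳] [MeasurableSingletonClass 𝒳]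
    (Z D : Ω → ℝ) (X : Ω → 𝒳)
    (hZmeas : Measurable Z) (hDmeas : Measurable D) (hXmeas : Measurable X)
    (hZ01 : ∀ ω, Z ω = 0 ∨ Z ω = 1) (hD01 : ∀ ω, D ω = 0 ∨ D ω = 1)
    (x : 𝒳)
    (h0pos : 0 < μ ({ω | Z ω = 0} ∩ {ω | X ω = x}))
    (h1pos : 0 < μ ({ω | Z ω = 1} ∩ {ω | X ω = x}))
    (c0 k0 c1 k1 : ℝ) (g : Ω → ℝ)
    (hg0 : ∀ ω ∈ ({ω | Z ω = 0} ∩ {ω | X ω = x}), g ω = (D ω - c0) * k0)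
    (hg1 : ∀ ω ∈ ({ω | Z ω = 1} ∩ {ω | X ω = x}), g ω = (D ω - c1) * k1) :
    condMean μ g {ω | X ω = x} =
      ((condMean μ D ({ω | Z ω = 0} ∩ {ω | X ω = x}) - c0) * k0 *
          (μ ({ω | Z ω = 0} ∩ {ω | X ω = x})).toReal
        + (condMean μ D ({ω | Z ω = 1} ∩ {ω | X ω = x}) - c1) * k1 *
          (μ ({ω | Z ω = 1} ∩ {ω | X ω = x})).toReal) /
        (μ {ω | X ω = x}).toReal := by
  set A0 := {ω | Z ω = 0} ∩ {ω | X ω = x} with hA0def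
  set A1 := {ω | Z ω = 1} ∩ {ω | X ω = x} with hA1def
  have hZ0m : MeasurableSet {ω | Z ω = 0} := hZmeas (measurableSet_singleton 0)
  have hZ1m : MeasurableSet {ω | Z ω = 1} := hZmeas (measurableSet_singleton 1)
  have hXm : MeasurableSet {ω | X ω = x} := hXmeas (measurableSet_singleton x)
  have hA0m : MeasurableSet A0 := hZ0m.inter hXm
  have hA1m : MeasurableSet A1 := hZ1m.inter hXm
  have hunion : {ω | X ω = x} = A0 ∪ A1 := by
    ext ω
    simp only [hA0def, hA1def, Set.mem_setOf_eq, Set.mem_union, Set.mem_inter_iff]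
    rcases hZ01 ω with h | h <;> simp [h]
  have hdisj : Disjoint A0 A1 := by
    rw [Set.disjoint_left]
    rintro ω ⟨h0, -⟩ ⟨h1, -⟩
    simp only [Set.mem_setOf_eq] at h0 h1
    rw [h0] at h1
    norm_num at h1
  obtain ⟨hint0, hval0⟩ := setIntegral_affine_piece μ D hDmeas hD01 A0 hA0m h0pos c0 k0 g hg0
  obtain ⟨hint1, hval1⟩ := setIntegral_affine_piece μ D hDmeas hD01 A1 hA1m h1pos c1 k1 g hg1
  rw [condMean, hunion, setIntegral_union hdisj hA1m hint0 hint1, hval0, hval1]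

theorem g_equation_deltaD_doubly_robust
    {Ω : Type*} [MeasurableSpace Ω] (μ : Measure Ω) [IsProbabilityMeasure μ]
    {𝒳 : Type*} [Fintype 𝒳] [MeasurableSpace 𝒳] [MeasurableSingletonClass 𝒳]
    (Z D : Ω → ℝ) (X : Ω → 𝒳)
    (hZmeas : Measurable Z) (hDmeas : Measurable D) (hXmeas : Measurable X)
    (hZ01 : ∀ ω, Z ω = 0 ∨ Z ω = 1) (hD01 : ∀ ω, D ω = 0 ∨ D ω = 1)
    -- positivity
    (hPos : ∀ (z : ℝ), (z = 0 ∨ z = 1) → ∀ (x : 𝒳),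
      0 < μ ({ω | Z ω = z} ∩ {ω | X ω = x}))
    -- f(z | x) = μ(Z = z | X = x)
    (f : ℝ → 𝒳 → ℝ)
    (hf : ∀ (z : ℝ) (x : 𝒳),
      f z x = (μ ({ω | Z ω = z} ∩ {ω | X ω = x})).toReal / (μ {ω | X ω = x}).toReal)
    -- p_z^D(x) = E[D | Z=z, X=x] and δ^D(x) = p_1^D(x) − p_0^D(x)
    (pD : ℝ → 𝒳 → ℝ)
    (hpD : ∀ (z : ℝ) (x : 𝒳),
      pD z x = condMean μ D ({ω | Z ω = z} ∩ {ω | X ω = x}))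
    (δD : 𝒳 → ℝ) (hδD : ∀ x, δD x = pD 1 x - pD 0 x) :
    (∀ (w : ℝ → 𝒳 → ℝ) (x : 𝒳),
      condMean μ
          (fun ω => (D ω - δD (X ω) * Z ω - pD 0 (X ω)) * w (Z ω) (X ω))
          {ω | X ω = x} = 0)
    ∧ (∀ (ps : 𝒳 → ℝ) (x : 𝒳),
      condMean μ
          (fun ω => (D ω - δD (X ω) * Z ω - ps (X ω)) * (2 * Z ω - 1) / f (Z ω) (X ω))
          {ω | X ω = x} = 0) := by
  constructor
  · intro w x
    rw [condMean_split μ Z D X hZmeas hDmeas hXmeas hZ01 hD01 x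
        (hPos 0 (Or.inl rfl) x) (hPos 1 (Or.inr rfl) x)
        (pD 0 x) (w 0 x) (δD x + pD 0 x) (w 1 x) _
        (by rintro ω ⟨hz, hx⟩
            simp only [Set.mem_setOf_eq] at hz hx
            simp only [hz, hx]; ring)
        (by rintro ω ⟨hz, hx⟩
            simp only [Set.mem_setOf_eq] at hz hx
            simp only [hz, hx]; ring)]
    rw [← hpD 0 x, ← hpD 1 x, hδD x]
    ring_nf
  · intro ps x
    have h0pos := hPos 0 (Or.inl rfl) x
    have h1pos := hPos 1 (Or.inr rfl) x
    set A0 := {ω | Z ω = 0} ∩ {ω | X ω = x} with hA0def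
    set A1 := {ω | Z ω = 1} ∩ {ω | X ω = x} with hA1def
    set t0 := (μ A0).toReal with ht0def
    set t1 := (μ A1).toReal with ht1def
    set M := (μ {ω | X ω = x}).toReal with hMdef
    have ht0ne : t0 ≠ 0 :=
      ENNReal.toReal_ne_zero.2 ⟨h0pos.ne', (measure_lt_top μ _).ne⟩
    have ht1ne : t1 ≠ 0 :=
      ENNReal.toReal_ne_zero.2 ⟨h1pos.ne', (measure_lt_top μ _).ne⟩
    have hMpos : 0 < μ {ω | X ω = x} :=
      lt_of_lt_of_le h0pos (measure_mono Set.inter_subset_right)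
    have hMne : M ≠ 0 :=
      ENNReal.toReal_ne_zero.2 ⟨hMpos.ne', (measure_lt_top μ _).ne⟩
    rw [condMean_split μ Z D X hZmeas hDmeas hXmeas hZ01 hD01 x h0pos h1pos
        (ps x) ((-1) / f 0 x) (δD x + ps x) (1 / f 1 x) _
        (by rintro ω ⟨hz, hx⟩
            simp only [Set.mem_setOf_eq] at hz hx
            simp only [hz, hx]; ring)
        (by rintro ω ⟨hz, hx⟩
            simp only [Set.mem_setOf_eq] at hz hx
            simp only [hz, hx]; ring)]
    rw [← hpD 0 x, ← hpD 1 x]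
    have hk0 : (-1) / f 0 x * t0 = -M := by
      rw [hf 0 x, ← hA0def, ← ht0def, ← hMdef]
      field_simp
    have hk1 : 1 / f 1 x * t1 = M := by
      rw [hf 1 x, ← hA1def, ← ht1def, ← hMdef]
      field_simp
    have : (pD 0 x - ps x) * ((-1) / f 0 x) * t0
        + (pD 1 x - (δD x + ps x)) * (1 / f 1 x) * t1
        = (pD 0 x - ps x) * (-M) + (pD 1 x - (δD x + ps x)) * M := by
      rw [mul_assoc, mul_assoc, hk0, hk1]
    rw [this, hδD x]
    ring_nf
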